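/- Let K be a commutative ring and let L be a Lie algebra over K whose underlying K-module is free. Then the canonical map ι : L → U(L) from L into its universal enveloping algebra is injective, and it is a Lie algebra homomorphism with respect to the commutator bracket on U(L), i.e. ι(⁅x,y⁆) = ι(x)·ι(y) − ι(y)·ι(x) for all x, y ∈ L. -/

import Mathlib

open Finsupp Filter List
attribute [local instance 100] LieRing.ofAssociativeRing

namespace PBWAux
variable {K : Type*} [CommRing K] {L : Type*} [LieRing L] [LieAlgebra K L]
variable {B : Type*} [LinearOrder B]
abbrev V (K : Type*) [CommRing K] (B : Type*) := List B →₀ K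
variable (b : Module.Basis B K L)

noncomputable def act : ℕ → B → List B → V K B
  | 0, _, _ => 0
  | _+1, i, [] => Finsupp.single [i] 1
  | n+1, i, j :: J =>
    if i ≤ j then Finsupp.single (i :: j :: J) 1
    else (act n i J).sum (fun M c => c • act n j M)
         + ((b.repr ⁅b i, b j⁆).sum fun k c => c • act n k J)

theorem act_nil (n : ℕ) (i : B) : act b (n+1) i [] = Finsupp.single [i] 1 := rfl

theorem act_cons_le (n : ℕ) {i j : B} (h : i ≤ j) (J : List B) :
    act b (n+1) i (j :: J) = Finsupp.single (i :: j :: J) 1 := by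
  rw [act, if_pos h]

theorem act_cons_lt (n : ℕ) {i j : B} (h : j < i) (J : List B) :
    act b (n+1) i (j :: J) =
      (act b n i J).sum (fun M c => c • act b n j M)
        + ((b.repr ⁅b i, b j⁆).sum fun k c => c • act b n k J) := by
  rw [act, if_neg (not_le.mpr h)]

def EvVal (i : B) (J : List B) (v : V K B) : Prop :=
  ∀ᶠ n in atTop, act b n i J = v

theorem EvVal.unique {i : B} {J : List B} {v w : V K B} (h1 : EvVal b i J v)
    (h2 : EvVal b i J w) : v = w := by
  obtain ⟨n, e1, e2⟩ := (h1.and h2).exists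
  rw [← e1, e2]

open scoped Classical in
noncomputable def Act (i : B) (J : List B) : V K B :=
  if h : List.Pairwise (· ≤ ·) J ∧ ∃ v, EvVal b i J v then h.2.choose else 0

theorem Act_of_unsorted {J : List B} (h : ¬ List.Pairwise (· ≤ ·) J) (i : B) :
    Act b i J = 0 := dif_neg (by tauto)

theorem evVal_act {i : B} {J : List B} (hs : List.Pairwise (· ≤ ·) J)
    (h : ∃ v, EvVal b i J v) : EvVal b i J (Act b i J) := by
  classical
  rw [Act, dif_pos ⟨hs, h⟩]
  exact (⟨hs, h⟩ : _ ∧ _).2.choose_spec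

theorem Act_eq_of_evVal {i : B} {J : List B} {v : V K B} (hs : List.Pairwise (· ≤ ·) J)
    (h : EvVal b i J v) : Act b i J = v :=
  (evVal_act b hs ⟨v, h⟩).unique b h

/-- The main stabilization lemma. -/
theorem good [WellFoundedLT B] :
    ∀ (i : B) (J : List B), List.Pairwise (· ≤ ·) J →
      (∃ v, EvVal b i J v) ∧
        ∀ M ∈ (Act b i J).support, List.Pairwise (· ≤ ·) M ∧ M.length ≤ J.length + 1 := by
  have wfl : WellFounded (Prod.Lex ((· < ·) : ℕ → ℕ → Prop) ((· < ·) : B → B → Prop)) :=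
    WellFounded.prod_lex wellFounded_lt wellFounded_lt
  have MAIN : ∀ p : ℕ × B, ∀ (i : B) (J : List B), J.length = p.1 → i = p.2 →
      List.Pairwise (· ≤ ·) J →
      (∃ v, EvVal b i J v) ∧
        ∀ M ∈ (Act b i J).support, List.Pairwise (· ≤ ·) M ∧ M.length ≤ J.length + 1 := by
    intro p
    induction p using wfl.induction with
    | _ p IH =>
    obtain ⟨n, i₀⟩ := p
    rintro i J hlen rfl hs
    subst hlen
    match J, hs with
    | [], _ =>
      have hev : EvVal b i [] (Finsupp.single [i] 1) := by
        refine eventually_atTop.mpr ⟨1, fun n hn => ?_⟩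
        obtain ⟨m, rfl⟩ : ∃ m, n = m + 1 := ⟨n - 1, by omega⟩
        exact act_nil b m i
      refine ⟨⟨_, hev⟩, ?_⟩
      rw [Act_eq_of_evVal b (by simp) hev]
      intro M hM
      have := Finsupp.support_single_subset hM
      simp only [Finset.mem_singleton] at this
      subst this
      simp
    | j :: J', hs =>
      have hsJ' : List.Pairwise (· ≤ ·) J' := (List.pairwise_cons.mp hs).2
      by_cases hij : i ≤ j
      · have hev : EvVal b i (j :: J') (Finsupp.single (i :: j :: J') 1) := by
          refine eventually_atTop.mpr ⟨1, fun n hn => ?_⟩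
          obtain ⟨m, rfl⟩ : ∃ m, n = m + 1 := ⟨n - 1, by omega⟩
          exact act_cons_le b m hij J'
        refine ⟨⟨_, hev⟩, ?_⟩
        rw [Act_eq_of_evVal b hs hev]
        intro M hM
        have := Finsupp.support_single_subset hM
        simp only [Finset.mem_singleton] at this
        subst this
        refine ⟨List.pairwise_cons.mpr ⟨?_, hs⟩, by simp⟩
        intro c hc
        rcases List.mem_cons.mp hc with rfl | hc
        · exact hij
        · exact le_trans hij ((List.pairwise_cons.mp hs).1 c hc)
      · have hji : j < i := not_le.mp hij
        -- induction hypotheses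
        have IH1 := IH (J'.length, i) (Prod.Lex.left _ _ (by simp)) i J' rfl rfl hsJ'
        obtain ⟨⟨w₀, hw₀⟩, hsupp⟩ := IH1
        set w : V K B := Act b i J' with hw
        have hww : EvVal b i J' w := evVal_act b hsJ' ⟨w₀, hw₀⟩
        have IH2 : ∀ M ∈ w.support,
            (∃ v, EvVal b j M v) ∧
              ∀ N ∈ (Act b j M).support, List.Pairwise (· ≤ ·) N ∧ N.length ≤ M.length + 1 := by
          intro M hM
          obtain ⟨hMs, hMl⟩ := hsupp M hM
          rcases lt_or_eq_of_le hMl with h | h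
          · exact IH (M.length, j) (Prod.Lex.left _ _ (by simpa using h)) j M rfl rfl hMs
          · exact IH (M.length, j) (h ▸ Prod.Lex.right _ hji) j M rfl rfl hMs
        have IH3 : ∀ k ∈ (b.repr ⁅b i, b j⁆).support,
            (∃ v, EvVal b k J' v) ∧
              ∀ N ∈ (Act b k J').support, List.Pairwise (· ≤ ·) N ∧ N.length ≤ J'.length + 1 :=
          fun k _ => IH (J'.length, k) (Prod.Lex.left _ _ (by simp)) k J' rfl rfl hsJ'
        set v : V K B := w.sum (fun M c => c • Act b j M)
            + ((b.repr ⁅b i, b j⁆).sum fun k c => c • Act b k J') with hv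
        have hev : EvVal b i (j :: J') v := by
          have h2 : ∀ᶠ n in atTop, ∀ M ∈ w.support, act b n j M = Act b j M :=
            (eventually_all_finset _).mpr fun M hM =>
              evVal_act b (hsupp M hM).1 (IH2 M hM).1
          have h3 : ∀ᶠ n in atTop, ∀ k ∈ (b.repr ⁅b i, b j⁆).support,
              act b n k J' = Act b k J' :=
            (eventually_all_finset _).mpr fun k hk => evVal_act b hsJ' (IH3 k hk).1
          obtain ⟨N, hN⟩ := eventually_atTop.mp ((hww.and h2).and h3)
          refine eventually_atTop.mpr ⟨N + 1, fun n hn => ?_⟩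
          obtain ⟨m, rfl⟩ : ∃ m, n = m + 1 := ⟨n - 1, by omega⟩
          obtain ⟨⟨e1, e2⟩, e3⟩ := hN m (by omega)
          rw [act_cons_lt b m hji J', e1, hv]
          congr 1
          · exact Finsupp.sum_congr fun M hM => by rw [e2 M hM]
          · exact Finsupp.sum_congr fun k hk => by rw [e3 k hk]
        refine ⟨⟨v, hev⟩, ?_⟩
        rw [Act_eq_of_evVal b hs hev]
        intro M hM
        rcases Finset.mem_union.mp (Finsupp.support_add hM) with h | h
        · obtain ⟨M', hM', hmem⟩ := Finset.mem_biUnion.mp (Finsupp.support_sum h)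
          have hmem' := Finsupp.support_smul hmem
          obtain ⟨hN1, hN2⟩ := (IH2 M' hM').2 M hmem'
          exact ⟨hN1, by
            have := (hsupp M' hM').2
            simp only [List.length_cons]
            omega⟩
        · obtain ⟨k, hk, hmem⟩ := Finset.mem_biUnion.mp (Finsupp.support_sum h)
          have hmem' := Finsupp.support_smul hmem
          obtain ⟨hN1, hN2⟩ := (IH3 k hk).2 M hmem'
          exact ⟨hN1, by simp only [List.length_cons]; omega⟩
  exact fun i J hs => MAIN (J.length, i) i J rfl rfl hs

section Rules
variable [WellFoundedLT B]

theorem act_stab {i : B} {J : List B} (hs : List.Pairwise (· ≤ ·) J) :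
    EvVal b i J (Act b i J) := evVal_act b hs (good b i J hs).1

theorem Act_support {i : B} {J : List B} (hs : List.Pairwise (· ≤ ·) J) :
    ∀ M ∈ (Act b i J).support, List.Pairwise (· ≤ ·) M ∧ M.length ≤ J.length + 1 :=
  (good b i J hs).2

theorem Act_nil (i : B) : Act b i [] = Finsupp.single [i] 1 :=
  Act_eq_of_evVal b (by simp) <| eventually_atTop.mpr ⟨1, fun n hn => by
    obtain ⟨m, rfl⟩ : ∃ m, n = m + 1 := ⟨n - 1, by omega⟩
    exact act_nil b m i⟩

theorem Act_cons_le {i j : B} (h : i ≤ j) {J : List B}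
    (hs : List.Pairwise (· ≤ ·) (j :: J)) :
    Act b i (j :: J) = Finsupp.single (i :: j :: J) 1 :=
  Act_eq_of_evVal b hs <| eventually_atTop.mpr ⟨1, fun n hn => by
    obtain ⟨m, rfl⟩ : ∃ m, n = m + 1 := ⟨n - 1, by omega⟩
    exact act_cons_le b m h J⟩

/-- uniform statement of rules R1/R2 : if `i :: J` is sorted then `Act i J = z (i :: J)`. -/
theorem Act_sorted_cons {i : B} {J : List B} (hs : List.Pairwise (· ≤ ·) (i :: J)) :
    Act b i J = Finsupp.single (i :: J) 1 := by
  match J with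
  | [] => exact Act_nil b i
  | j :: J' =>
    exact Act_cons_le b ((List.pairwise_cons.mp hs).1 j (by simp)) (List.pairwise_cons.mp hs).2

theorem Act_cons_lt {i j : B} (h : j < i) {J : List B}
    (hs : List.Pairwise (· ≤ ·) (j :: J)) :
    Act b i (j :: J) = (Act b i J).sum (fun M c => c • Act b j M)
      + ((b.repr ⁅b i, b j⁆).sum fun k c => c • Act b k J) := by
  have hsJ : List.Pairwise (· ≤ ·) J := (List.pairwise_cons.mp hs).2
  refine Act_eq_of_evVal b hs ?_
  have h1 := act_stab b (i := i) hsJ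
  have h2 : ∀ᶠ n in atTop, ∀ M ∈ (Act b i J).support, act b n j M = Act b j M :=
    (eventually_all_finset _).mpr fun M hM => act_stab b (Act_support b hsJ M hM).1
  have h3 : ∀ᶠ n in atTop, ∀ k ∈ (b.repr ⁅b i, b j⁆).support,
      act b n k J = Act b k J :=
    (eventually_all_finset _).mpr fun k _ => act_stab b hsJ
  obtain ⟨N, hN⟩ := eventually_atTop.mp ((h1.and h2).and h3)
  refine eventually_atTop.mpr ⟨N + 1, fun n hn => ?_⟩
  obtain ⟨m, rfl⟩ : ∃ m, n = m + 1 := ⟨n - 1, by omega⟩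
  obtain ⟨⟨e1, e2⟩, e3⟩ := hN m (by omega)
  rw [act_cons_lt b m h J, e1]
  congr 1
  · exact Finsupp.sum_congr fun M hM => by rw [e2 M hM]
  · exact Finsupp.sum_congr fun k hk => by rw [e3 k hk]

/-- The action of the `i`-th basis vector, as a linear endomorphism of `V`. -/
noncomputable def A (i : B) : V K B →ₗ[K] V K B :=
  Finsupp.linearCombination K (Act b i)

theorem A_apply (i : B) (v : V K B) : A b i v = v.sum fun M c => c • Act b i M :=
  Finsupp.linearCombination_apply _ _

theorem A_single (i : B) (J : List B) : A b i (Finsupp.single J 1) = Act b i J := by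
  simp [A]

/-- The action of a general element of `L`. -/
noncomputable def ρ : L →ₗ[K] (V K B →ₗ[K] V K B) :=
  Module.Basis.constr b K (fun i => A b i)

theorem rho_basis (i : B) : ρ b (b i) = A b i := Module.Basis.constr_basis b K _ i

theorem rho_apply (x : L) (v : V K B) :
    ρ b x v = (b.repr x).sum fun k c => c • A b k v := by
  rw [ρ, Module.Basis.constr_apply]
  exact map_finsuppSum (LinearMap.applyₗ v) _ _ |>.trans <| by simp

theorem rho_single (x : L) (J : List B) :
    ρ b x (Finsupp.single J 1) = (b.repr x).sum fun k c => c • Act b k J := by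
  rw [rho_apply]
  exact Finsupp.sum_congr fun k _ => by rw [A_single]

theorem rho_single_unsorted (x : L) {J : List B} (h : ¬ List.Pairwise (· ≤ ·) J) :
    ρ b x (Finsupp.single J 1) = 0 := by
  rw [rho_single]
  exact (Finsupp.sum_congr (g2 := fun _ _ => (0 : V K B)) fun k _ => by rw [Act_of_unsorted b h, smul_zero]).trans Finset.sum_const_zero


/-- the commutation relation for the action, at a vector `v`. -/
def commEq (x y : L) (v : V K B) : Prop :=
  ρ b x (ρ b y v) - ρ b y (ρ b x v) = ρ b ⁅x, y⁆ v

theorem commEq_ext {x y : L} {v : V K B}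
    (h : ∀ M ∈ v.support, commEq b x y (Finsupp.single M 1)) : commEq b x y v := by
  set D : V K B →ₗ[K] V K B :=
    ρ b x ∘ₗ ρ b y - ρ b y ∘ₗ ρ b x - ρ b ⁅x, y⁆ with hD
  have hDv : ∀ w, D w = ρ b x (ρ b y w) - ρ b y (ρ b x w) - ρ b ⁅x, y⁆ w := fun w => rfl
  have : D v = 0 := by
    conv_lhs => rw [← v.sum_single]
    rw [map_finsuppSum]
    refine (Finsupp.sum_congr (g2 := fun _ _ => (0 : V K B)) fun M hM => ?_).trans Finset.sum_const_zero
    have h1 : (Finsupp.single M (v M) : V K B) = v M • Finsupp.single M 1 := by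
      rw [Finsupp.smul_single, smul_eq_mul, mul_one]
    rw [h1, map_smul, hDv]
    have := h M hM
    rw [commEq] at this
    rw [this, sub_self, smul_zero]
  have := hDv v ▸ this
  rw [commEq, ← sub_eq_zero]
  exact this

theorem commEq.symm {x y : L} {v : V K B} (h : commEq b x y v) : commEq b y x v := by
  rw [commEq] at h ⊢
  rw [← lie_skew, map_neg, LinearMap.neg_apply, ← h]
  abel

theorem commEq_same (x : L) (v : V K B) : commEq b x x v := by
  rw [commEq, sub_self, lie_self, map_zero, LinearMap.zero_apply]

theorem commEq_unsorted (x y : L) {M : List B} (h : ¬ List.Pairwise (· ≤ ·) M) :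
    commEq b x y (Finsupp.single M 1) := by
  rw [commEq, rho_single_unsorted b x h, rho_single_unsorted b y h,
    rho_single_unsorted b ⁅x, y⁆ h, map_zero, map_zero, sub_self]

/-- bilinear extension: if the commutation relation holds at `z J` for all pairs of basis
vectors then it holds for all pairs of elements of `L`. -/
theorem commEq_gen {J : List B} (h : ∀ i j : B, commEq b (b i) (b j) (Finsupp.single J 1))
    (x y : L) : commEq b x y (Finsupp.single J 1) := by
  set zJ : V K B := Finsupp.single J 1
  let Φ : L →ₗ[K] L →ₗ[K] V K B := LinearMap.mk₂ K
    (fun x y => ρ b x (ρ b y zJ) - ρ b y (ρ b x zJ) - ρ b ⁅x, y⁆ zJ)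
    (by intro x x' y; simp only [map_add, LinearMap.add_apply, add_lie]; abel)
    (by intro c x y; simp only [map_smul, LinearMap.smul_apply, smul_lie, smul_sub])
    (by intro x y y'; simp only [map_add, LinearMap.add_apply, lie_add]; abel)
    (by intro c x y; simp only [map_smul, LinearMap.smul_apply, lie_smul, smul_sub])
  have hΦ : Φ = 0 := by
    refine b.ext fun i => b.ext fun j => ?_
    have := h i j
    rw [commEq, ← sub_eq_zero] at this
    simpa [Φ] using this
  have : Φ x y = 0 := by rw [hΦ]; rfl
  rw [commEq, ← sub_eq_zero]
  simpa [Φ] using this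

/-- The key PBW commutation lemma: the relation holds on all sorted monomials. -/
theorem comm_sorted : ∀ (J : List B), List.Pairwise (· ≤ ·) J →
    ∀ x y : L, commEq b x y (Finsupp.single J 1) := by
  suffices H : ∀ (n : ℕ) (J : List B), J.length = n → List.Pairwise (· ≤ ·) J →
      ∀ x y : L, commEq b x y (Finsupp.single J 1) from
    fun J hs => H J.length J rfl hs
  intro n
  induction n using Nat.strong_induction_on with
  | _ n IH =>
  have full_lt : ∀ (M : List B), M.length < n → List.Pairwise (· ≤ ·) M →
      ∀ x y : L, commEq b x y (Finsupp.single M 1) :=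
    fun M h hs => IH M.length h M rfl hs
  have wfP : WellFounded (Prod.Lex ((· < ·) : B → B → Prop) ((· < ·) : B → B → Prop)) :=
    WellFounded.prod_lex wellFounded_lt wellFounded_lt
  have key : ∀ p : B × B, ∀ i j : B, i = p.1 → j = p.2 → j < i →
      ∀ J : List B, J.length = n → List.Pairwise (· ≤ ·) J →
      commEq b (b i) (b j) (Finsupp.single J 1) := by
    intro p
    induction p using wfP.induction with
    | _ p IHp =>
    obtain ⟨i₀, j₀⟩ := p
    rintro i j rfl rfl hji J hlen hs
    by_cases hA : List.Pairwise (· ≤ ·) (j :: J)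
    · -- Case A : `j` is below all of `J`
      have h1 : ρ b (b j) (Finsupp.single J (1:K)) = Finsupp.single (j :: J) 1 := by
        rw [rho_basis, A_single, Act_sorted_cons b hA]
      have h2 : ρ b (b i) (Finsupp.single (j :: J) (1:K))
          = A b j (Act b i J) + ((b.repr ⁅b i, b j⁆).sum fun k c => c • Act b k J) := by
        rw [rho_basis, A_single, Act_cons_lt b hji hA, ← A_apply]
      have h3 : A b j (Act b i J) = ρ b (b j) (ρ b (b i) (Finsupp.single J (1:K))) := by
        rw [rho_basis, rho_basis, A_single]
      have h4 : ((b.repr ⁅b i, b j⁆).sum fun k c => c • Act b k J)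
          = ρ b ⁅b i, b j⁆ (Finsupp.single J (1:K)) := (rho_single b _ J).symm
      rw [commEq, h1, h2, h3, h4]
      abel
    · -- Case B : `J = k :: J'` with `k < j < i`
      rcases J with _ | ⟨k, J'⟩
      · exact absurd (List.pairwise_singleton _ j) hA
      have hsJ' : List.Pairwise (· ≤ ·) J' := (List.pairwise_cons.mp hs).2
      have hkj : k < j := by
        by_contra hc
        push_neg at hc
        refine hA (List.pairwise_cons.mpr ⟨fun c hc' => ?_, hs⟩)
        rcases List.mem_cons.mp hc' with rfl | h'
        · exact hc
        · exact le_trans hc ((List.pairwise_cons.mp hs).1 c h')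
      have hki : k < i := lt_trans hkj hji
      have hlen2 : J'.length + 1 = n := by simpa using hlen
      set u : V K B := Finsupp.single J' 1 with hu
      have hzJ : (Finsupp.single (k :: J') (1:K) : V K B) = ρ b (b k) u := by
        rw [rho_basis, A_single, Act_sorted_cons b hs]
      have FL : ∀ x y : L, commEq b x y u := full_lt J' (by omega) hsJ'
      have rji : ρ b (b j) u = Act b j J' := by rw [rho_basis, A_single]
      have rii : ρ b (b i) u = Act b i J' := by rw [rho_basis, A_single]
      have s1 : ρ b (b j) (ρ b (b k) u) - ρ b (b k) (ρ b (b j) u)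
          = ρ b ⁅b j, b k⁆ u := FL (b j) (b k)
      have s2 : ρ b (b i) (ρ b (b k) (ρ b (b j) u)) - ρ b (b k) (ρ b (b i) (ρ b (b j) u))
          = ρ b ⁅b i, b k⁆ (ρ b (b j) u) := by
        rw [rji]
        refine commEq_ext b fun M hM => ?_
        obtain ⟨hMs, hMl⟩ := Act_support b hsJ' M hM
        rcases lt_or_eq_of_le hMl with h | h
        · exact full_lt M (by omega) hMs (b i) (b k)
        · exact IHp (i, k) (Prod.Lex.right _ hkj) i k rfl rfl hki M (by omega) hMs
      have s4 : ρ b (b j) (ρ b (b k) (ρ b (b i) u)) - ρ b (b k) (ρ b (b j) (ρ b (b i) u))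
          = ρ b ⁅b j, b k⁆ (ρ b (b i) u) := by
        rw [rii]
        refine commEq_ext b fun M hM => ?_
        obtain ⟨hMs, hMl⟩ := Act_support b hsJ' M hM
        rcases lt_or_eq_of_le hMl with h | h
        · exact full_lt M (by omega) hMs (b j) (b k)
        · exact IHp (j, k) (Prod.Lex.left _ _ hji) j k rfl rfl hkj M (by omega) hMs
      have s3 : ρ b (b i) (ρ b ⁅b j, b k⁆ u) - ρ b ⁅b j, b k⁆ (ρ b (b i) u)
          = ρ b ⁅b i, ⁅b j, b k⁆⁆ u := FL (b i) ⁅b j, b k⁆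
      have s5 : ρ b (b j) (ρ b ⁅b i, b k⁆ u) - ρ b ⁅b i, b k⁆ (ρ b (b j) u)
          = ρ b ⁅b j, ⁅b i, b k⁆⁆ u := FL (b j) ⁅b i, b k⁆
      have s6 : ρ b (b i) (ρ b (b k) u) - ρ b (b k) (ρ b (b i) u)
          = ρ b ⁅b i, b k⁆ u := FL (b i) (b k)
      have s7 : ρ b (b i) (ρ b (b j) u) - ρ b (b j) (ρ b (b i) u)
          = ρ b ⁅b i, b j⁆ u := FL (b i) (b j)
      have s8 : ρ b (b k) (ρ b ⁅b i, b j⁆ u) - ρ b ⁅b i, b j⁆ (ρ b (b k) u)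
          = ρ b ⁅b k, ⁅b i, b j⁆⁆ u := FL (b k) ⁅b i, b j⁆
      have e1 : ρ b (b i) (ρ b (b j) (ρ b (b k) u))
          = ρ b (b k) (ρ b (b i) (ρ b (b j) u)) + ρ b ⁅b i, b k⁆ (ρ b (b j) u)
            + (ρ b ⁅b j, b k⁆ (ρ b (b i) u) + ρ b ⁅b i, ⁅b j, b k⁆⁆ u) := by
        rw [eq_add_of_sub_eq s1, map_add, eq_add_of_sub_eq s2, eq_add_of_sub_eq s3]
        abel
      have e2 : ρ b (b j) (ρ b (b i) (ρ b (b k) u))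
          = ρ b (b k) (ρ b (b j) (ρ b (b i) u)) + ρ b ⁅b j, b k⁆ (ρ b (b i) u)
            + (ρ b ⁅b i, b k⁆ (ρ b (b j) u) + ρ b ⁅b j, ⁅b i, b k⁆⁆ u) := by
        rw [eq_add_of_sub_eq s6, map_add, eq_add_of_sub_eq s4, eq_add_of_sub_eq s5]
        abel
      have e3 : ρ b (b k) (ρ b (b i) (ρ b (b j) u))
          = ρ b ⁅b i, b j⁆ (ρ b (b k) u) + ρ b ⁅b k, ⁅b i, b j⁆⁆ u
            + ρ b (b k) (ρ b (b j) (ρ b (b i) u)) := by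
        have h5 : ρ b (b k) (ρ b (b i) (ρ b (b j) u)) - ρ b (b k) (ρ b (b j) (ρ b (b i) u))
            = ρ b (b k) (ρ b ⁅b i, b j⁆ u) := by rw [← map_sub, s7]
        rw [eq_add_of_sub_eq h5, eq_add_of_sub_eq s8]
        abel
      have hL' : (⁅b i, ⁅b j, b k⁆⁆ : L) = ⁅b j, ⁅b i, b k⁆⁆ - ⁅b k, ⁅b i, b j⁆⁆ := by
        rw [leibniz_lie, ← lie_skew ⁅b i, b j⁆ (b k)]
        abel
      have jacW : ρ b ⁅b i, ⁅b j, b k⁆⁆ u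
          = ρ b ⁅b j, ⁅b i, b k⁆⁆ u - ρ b ⁅b k, ⁅b i, b j⁆⁆ u := by
        rw [hL', map_sub, LinearMap.sub_apply]
      rw [commEq, hzJ, e1, e2, e3, jacW]
      abel

  intro J hlen hs x y
  refine commEq_gen b (fun i j => ?_) x y
  rcases lt_trichotomy i j with h | h | h
  · exact (key (j, i) j i rfl rfl h J hlen hs).symm b
  · subst h; exact commEq_same b _ _
  · exact key (i, j) i j rfl rfl h J hlen hs

/-- The PBW action as a morphism of Lie algebras into the endomorphism algebra. -/
noncomputable def gLie : L →ₗ⁅K⁆ Module.End K (V K B) :=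
  { ρ b with
    map_lie' := by
      intro x y
      refine LinearMap.ext fun v => ?_
      have h : commEq b x y v := commEq_ext b fun M _ =>
        (em (List.Pairwise (· ≤ ·) M)).elim (fun hs => comm_sorted b M hs x y)
          (fun hs => commEq_unsorted b x y hs)
      rw [commEq] at h
      simpa [Ring.lie_def, LinearMap.sub_apply, Module.End.mul_apply] using h.symm }

theorem gLie_apply (x : L) : (gLie b x : V K B →ₗ[K] V K B) = ρ b x := rfl

theorem rho_empty (x : L) :
    ρ b x (Finsupp.single [] 1) = Finsupp.mapDomain (fun k => [k]) (b.repr x) := by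
  rw [rho_single, Finsupp.mapDomain]
  exact Finsupp.sum_congr fun k _ => by
    rw [Act_nil, Finsupp.smul_single, smul_eq_mul, mul_one]

theorem rho_inj : Function.Injective (fun x : L => ρ b x (Finsupp.single [] 1)) := by
  intro x y h
  simp only [rho_empty] at h
  have hinj : Function.Injective (fun k : B => [k]) := fun a c h => by simpa using h
  exact b.repr.injective (Finsupp.mapDomain_injective hinj h)

end Rules

end PBWAux

/-- If a Lie algebra `L` over a commutative ring `K` is free as a `K`-module, then the
canonical map `ι : L → U(L)` into the universal enveloping algebra is injective, and it is a
Lie algebra homomorphism for the commutator bracket on `U(L)`: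
`ι ⁅x, y⁆ = ι x * ι y - ι y * ι x`. -/
theorem pbw_iota_injective (K : Type*) [CommRing K] (L : Type*) [LieRing L] [LieAlgebra K L]
    [Module.Free K L] :
    Function.Injective (fun x : L => UniversalEnvelopingAlgebra.ι K x) ∧
    ∀ x y : L, UniversalEnvelopingAlgebra.ι K ⁅x, y⁆ =
      UniversalEnvelopingAlgebra.ι K x * UniversalEnvelopingAlgebra.ι K y -
        UniversalEnvelopingAlgebra.ι K y * UniversalEnvelopingAlgebra.ι K x := by
  constructor
  · obtain ⟨lo, wfo⟩ := exists_wellOrder (Module.Free.ChooseBasisIndex K L)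
    letI := lo
    letI := wfo
    set b := Module.Free.chooseBasis K L with hb
    intro x y hxy
    simp only at hxy
    have h1 : PBWAux.gLie b x = PBWAux.gLie b y := by
      have h := congrArg (UniversalEnvelopingAlgebra.lift K (PBWAux.gLie b)) hxy
      simpa only [UniversalEnvelopingAlgebra.lift_ι_apply] using h
    refine PBWAux.rho_inj b ?_
    simp only [← PBWAux.gLie_apply, h1]
  · intro x y
    have h := ((UniversalEnvelopingAlgebra.ι K : L →ₗ⁅K⁆ UniversalEnvelopingAlgebra K L)).map_lie x y
    rwa [LieRing.of_associative_ring_bracket] at h
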